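/- A graph G of order n has a Hamiltonian path if and only if its (n-1)-closure C_{n-1}(G) has a Hamiltonian path. -/

import Mathlib

open scoped Classical

/-- One step of forming the k-closure: join a pair of nonadjacent vertices
whose degree sum is at least k. -/
def ClosureStep {V : Type*} [Fintype V] (k : ℕ) (G H : SimpleGraph V) : Prop :=
  ∃ u v : V, u ≠ v ∧ ¬ G.Adj u v ∧ k ≤ G.degree u + G.degree v ∧
    H = G ⊔ SimpleGraph.edge u v

/-- `H` is a k-closure of `G`: obtained from `G` by successively joining pairs of
nonadjacent vertices of degree sum at least `k`, until no such pair remains. -/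
def IsKClosure {V : Type*} [Fintype V] (k : ℕ) (G H : SimpleGraph V) : Prop :=
  Relation.ReflTransGen (ClosureStep k) G H ∧ ∀ H', ¬ ClosureStep k H H'

namespace BCAux

open List Finset SimpleGraph

set_option linter.unusedSectionVars false

variable {V : Type*} [Fintype V]

/-- A Hamiltonian path, encoded as a list of vertices. -/
def HamList (G : SimpleGraph V) (l : List V) : Prop :=
  l ≠ [] ∧ l.Nodup ∧ (∀ w, w ∈ l) ∧ l.Chain' G.Adj

lemma HamList.mono {G G' : SimpleGraph V} (h : G ≤ G') {l : List V} (hl : HamList G l) :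
    HamList G' l :=
  ⟨hl.1, hl.2.1, hl.2.2.1, hl.2.2.2.imp fun _ _ hx => h hx⟩

lemma exists_walk_of_chain (G : SimpleGraph V) :
    ∀ (t : List V) (x : V), List.Chain G.Adj x t → ∃ y, ∃ p : G.Walk x y, p.support = x :: t
  | [], x, _ => ⟨x, .nil, rfl⟩
  | b :: t, x, h => by
    unfold List.Chain at h
    rw [List.isChain_cons_cons] at h
    obtain ⟨y, p, hp⟩ := exists_walk_of_chain G t b h.2
    exact ⟨y, .cons h.1 p, by simp [hp]⟩

lemma ham_iff_hamList [DecidableEq V] (G : SimpleGraph V) :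
    (∃ u v : V, ∃ p : G.Walk u v, p.IsHamiltonian) ↔ ∃ l, HamList G l := by
  constructor
  · rintro ⟨u, v, p, hp⟩
    exact ⟨p.support, p.support_ne_nil, hp.isPath.support_nodup, hp.mem_support,
      p.isChain_adj_support⟩
  · rintro ⟨l, hne, hnd, hcov, hch⟩
    obtain ⟨x, t, rfl⟩ := List.exists_cons_of_ne_nil hne
    obtain ⟨y, p, hp⟩ := exists_walk_of_chain G t x hch
    refine ⟨x, y, p, SimpleGraph.Walk.IsPath.isHamiltonian_of_mem
      (SimpleGraph.Walk.IsPath.mk' ?_) fun w => ?_⟩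
    · rw [hp]; exact hnd
    · rw [hp]; exact hcov w

lemma chain'_sup_edge {G : SimpleGraph V} {u v : V} :
    ∀ {m : List V}, (u ∉ m ∨ v ∉ m) → List.Chain' (G ⊔ SimpleGraph.edge u v).Adj m →
      List.Chain' G.Adj m
  | [], _, _ => List.isChain_nil
  | [_], _, _ => List.isChain_singleton _
  | x :: y :: m, hm, h => by
    unfold List.Chain' at h ⊢
    rw [List.isChain_cons_cons] at h ⊢
    have hxm : x ∈ x :: y :: m := List.mem_cons_self
    have hym : y ∈ x :: y :: m := List.mem_cons_of_mem _ List.mem_cons_self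
    refine ⟨?_, chain'_sup_edge (hm.imp (fun h' h'' => h' (List.mem_cons_of_mem _ h''))
      (fun h' h'' => h' (List.mem_cons_of_mem _ h''))) h.2⟩
    rcases h.1 with h1 | h1
    · exact h1
    · rw [SimpleGraph.edge_adj] at h1
      rcases h1.1 with ⟨rfl, rfl⟩ | ⟨rfl, rfl⟩ <;>
        rcases hm with hm | hm <;> [exact absurd hxm hm; exact absurd hym hm;
          exact absurd hym hm; exact absurd hxm hm]

lemma exists_bad_pair {R R' : V → V → Prop} :
    ∀ {m : List V}, List.Chain' R' m → ¬ List.Chain' R m →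
      ∃ a x y b, m = a ++ x :: y :: b ∧ R' x y ∧ ¬ R x y
  | [], _, h => absurd List.isChain_nil h
  | [x], _, h => absurd (List.isChain_singleton x) h
  | x :: y :: m, h', h => by
    unfold List.Chain' at h'
    rw [List.isChain_cons_cons] at h'
    by_cases hxy : R x y
    · have hnc : ¬ List.Chain' R (y :: m) := fun hc => h (List.isChain_cons_cons.mpr ⟨hxy, hc⟩)
      obtain ⟨a, x', y', b, heq, h1, h2⟩ := exists_bad_pair h'.2 hnc
      exact ⟨x :: a, x', y', b, by rw [List.cons_append, ← heq], h1, h2⟩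
    · exact ⟨[], x, y, m, rfl, h'.1, hxy⟩

lemma head?_eq_getD {l : List V} {d : V} (h : 0 < l.length) : l.head? = some (l.getD 0 d) := by
  rw [List.head?_eq_getElem?, List.getElem?_eq_getElem h, List.getD_eq_getElem _ _ h]

lemma getLast?_eq_getD {l : List V} {d : V} (h : 0 < l.length) :
    l.getLast? = some (l.getD (l.length - 1) d) := by
  have h' : l.length - 1 < l.length := by omega
  rw [List.getLast?_eq_getElem?, List.getElem?_eq_getElem h', List.getD_eq_getElem _ _ h']

lemma getLast?_take_eq {l : List V} {d : V} {j : ℕ} (h : j < l.length) :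
    (l.take (j + 1)).getLast? = some (l.getD j d) := by
  have hlen : (l.take (j + 1)).length = j + 1 := by simp; omega
  have h1 : 0 < (l.take (j + 1)).length := by omega
  rw [getLast?_eq_getD (d := d) h1, hlen]
  simp only [Nat.add_sub_cancel]
  have h2 : j < (l.take (j + 1)).length := by omega
  rw [List.getD_eq_getElem _ _ h2, List.getElem_take, List.getD_eq_getElem _ _ h]

lemma opt_getD {l : List V} {d : V} {i : ℕ} (h : i < l.length) : l[i]? = some (l.getD i d) := by
  rw [List.getElem?_eq_getElem h, List.getD_eq_getElem _ _ h]

lemma head?_drop_eq {l : List V} {d : V} {j : ℕ} (h : j < l.length) :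
    (l.drop j).head? = some (l.getD j d) := by
  rw [List.head?_eq_getElem?, List.getElem?_drop, Nat.add_zero, opt_getD h]

lemma getLast?_drop_eq {l : List V} {d : V} {j : ℕ} (h : j < l.length) :
    (l.drop j).getLast? = some (l.getD (l.length - 1) d) := by
  have hlen : (l.drop j).length = l.length - j := List.length_drop
  rw [List.getLast?_eq_getElem?, List.getElem?_drop]
  have heq : j + ((l.drop j).length - 1) = l.length - 1 := by omega
  rw [heq, opt_getD (by omega)]

lemma head?_take_eq {l : List V} {d : V} {j : ℕ} (h0 : 0 < l.length) :
    (l.take (j + 1)).head? = some (l.getD 0 d) := by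
  have h1 : 0 < (l.take (j + 1)).length := by simp; omega
  rw [head?_eq_getD (d := d) h1, List.getD_eq_getElem _ _ h1, List.getElem_take,
    List.getD_eq_getElem _ _ h0]

lemma card_filter_adj (G : SimpleGraph V) (w d : V) {m : List V} (hm : m.Nodup) :
    ((Finset.range m.length).filter fun j => G.Adj w (m.getD j d)).card
      = (G.neighborFinset w ∩ m.toFinset).card := by
  refine Finset.card_bij' (fun j _ => m.getD j d) (fun x _ => m.idxOf x) ?_ ?_ ?_ ?_
  · intro j hj
    simp only [Finset.mem_filter, Finset.mem_range] at hj
    refine Finset.mem_inter.mpr ⟨(SimpleGraph.mem_neighborFinset G w _).mpr hj.2,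
      List.mem_toFinset.mpr ?_⟩
    show m.getD j d ∈ m
    rw [List.getD_eq_getElem _ _ hj.1]
    exact List.getElem_mem _
  · intro x hx
    rw [Finset.mem_inter, SimpleGraph.mem_neighborFinset, List.mem_toFinset] at hx
    have hlt : m.idxOf x < m.length := List.idxOf_lt_length_iff.mpr hx.2
    simp only [Finset.mem_filter, Finset.mem_range]
    refine ⟨hlt, ?_⟩
    rw [List.getD_eq_getElem _ _ hlt, List.getElem_idxOf hlt]
    exact hx.1
  · intro j hj
    simp only [Finset.mem_filter, Finset.mem_range] at hj
    show m.idxOf (m.getD j d) = j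
    rw [List.getD_eq_getElem _ _ hj.1]
    exact List.Nodup.idxOf_getElem hm _ _
  · intro x hx
    rw [Finset.mem_inter, SimpleGraph.mem_neighborFinset, List.mem_toFinset] at hx
    have hlt : m.idxOf x < m.length := List.idxOf_lt_length_iff.mpr hx.2
    show m.getD (m.idxOf x) d = x
    rw [List.getD_eq_getElem _ _ hlt]
    exact List.getElem_idxOf hlt

lemma side_bound (G : SimpleGraph V) (u v d : V) (m : List V)
    (h0 : ¬ G.Adj v (m.getD 0 d))
    (hlast : ¬ G.Adj u (m.getD (m.length - 1) d))
    (hstep : ∀ j, j + 1 < m.length → G.Adj u (m.getD j d) → ¬ G.Adj v (m.getD (j + 1) d)) :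
    ((Finset.range m.length).filter fun j => G.Adj u (m.getD j d)).card
      + ((Finset.range m.length).filter fun j => G.Adj v (m.getD j d)).card
      ≤ m.length - 1 := by
  set s := m.length with hs
  rcases Nat.eq_zero_or_pos s with h | hpos
  · simp [h]
  set Au := (Finset.range s).filter fun j => G.Adj u (m.getD j d) with hAu
  set Av := (Finset.range s).filter fun j => G.Adj v (m.getD j d) with hAv
  have hAu' : Au.image (· + 1) ⊆ (Finset.range s).erase 0 := by
    intro x hx
    simp only [Finset.mem_image] at hx
    obtain ⟨j, hj, rfl⟩ := hx
    simp only [hAu, Finset.mem_filter, Finset.mem_range] at hj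
    have hjne : j ≠ s - 1 := fun h' => hlast (h' ▸ hj.2)
    rw [Finset.mem_erase, Finset.mem_range]
    exact ⟨by omega, by omega⟩
  have hAv' : Av ⊆ (Finset.range s).erase 0 := by
    intro x hx
    simp only [hAv, Finset.mem_filter, Finset.mem_range] at hx
    have : x ≠ 0 := fun h' => h0 (h' ▸ hx.2)
    rw [Finset.mem_erase, Finset.mem_range]
    exact ⟨this, hx.1⟩
  have hdisj : Disjoint (Au.image (· + 1)) Av := by
    rw [Finset.disjoint_left]
    intro x hx1 hx2
    simp only [Finset.mem_image] at hx1
    obtain ⟨j, hj, rfl⟩ := hx1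
    simp only [hAu, hAv, Finset.mem_filter, Finset.mem_range] at hj hx2
    exact hstep j hx2.1 hj.2 hx2.2
  have hcard : Au.card = (Au.image (· + 1)).card :=
    (Finset.card_image_of_injective _ fun a b h => by omega).symm
  calc Au.card + Av.card = (Au.image (· + 1)).card + Av.card := by rw [hcard]
    _ = ((Au.image (· + 1)) ∪ Av).card := (Finset.card_union_of_disjoint hdisj).symm
    _ ≤ ((Finset.range s).erase 0).card :=
        Finset.card_le_card (Finset.union_subset hAu' hAv')
    _ = s - 1 := by rw [Finset.card_erase_of_mem (Finset.mem_range.mpr hpos), Finset.card_range]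

lemma step_core {G : SimpleGraph V} {u v : V} (hne : u ≠ v) (hnadj : ¬ G.Adj u v)
    (hdeg : Fintype.card V - 1 ≤ G.degree u + G.degree v)
    (a b : List V) (hl : HamList (G ⊔ SimpleGraph.edge u v) (a ++ u :: v :: b)) :
    ∃ l', HamList G l' := by
  obtain ⟨hlne, hnd, hcov, hch⟩ := hl
  set p : List V := a ++ [u] with hp
  set q : List V := v :: b with hq
  have hpq : a ++ u :: v :: b = p ++ q := by simp [hp, hq]
  rw [hpq] at hnd hcov hch
  obtain ⟨hndp, hndq, hdisjpq⟩ := List.nodup_append'.mp hnd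
  have hup : u ∈ p := by simp [hp]
  have hvq : v ∈ q := List.mem_cons_self
  have hvp : v ∉ p := fun h => hdisjpq h hvq
  have huq : u ∉ q := fun h => hdisjpq hup h
  have hchp : List.Chain' G.Adj p := chain'_sup_edge (Or.inr hvp) (hch.prefix ⟨q, rfl⟩)
  have hchq : List.Chain' G.Adj q := chain'_sup_edge (Or.inl huq) (hch.suffix ⟨p, rfl⟩)
  have hs : 0 < p.length := by simp [hp]
  have ht : 0 < q.length := by simp [hq]
  have hplast : p.getLast? = some u := List.getLast?_concat
  have hplastD : p.getD (p.length - 1) u = u := by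
    have := getLast?_eq_getD (l := p) (d := u) hs
    rw [hplast] at this
    exact (Option.some_injective _ this.symm)
  have hq0 : q.getD 0 u = v := rfl
  -- the result builder
  have builder : ∀ l' : List V, l'.Perm (p ++ q) → List.Chain' G.Adj l' →
      ∃ l'', HamList G l'' := by
    intro l' hperm hch'
    refine ⟨l', ?_, (List.Perm.nodup_iff hperm).mpr hnd, fun w => hperm.mem_iff.mpr (hcov w), hch'⟩
    intro h
    rw [h] at hperm
    have := hperm.length_eq
    simp at this
  by_cases h1 : G.Adj v (p.getD 0 u)
  · -- reverse p, then q
    refine builder (p.reverse ++ q) ((List.reverse_perm p).append_right q) ?_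
    refine List.isChain_append.mpr ⟨List.isChain_reverse.mpr (hchp.imp fun _ _ h => h.symm),
      hchq, ?_⟩
    intro x hx y hy
    rw [List.getLast?_reverse, head?_eq_getD (d := u) hs] at hx
    rw [hq, List.head?_cons] at hy
    cases hx; cases hy
    exact h1.symm
  by_cases h2 : G.Adj u (q.getD (q.length - 1) u)
  · refine builder (p ++ q.reverse) (List.Perm.append_left p (List.reverse_perm q)) ?_
    refine List.isChain_append.mpr ⟨hchp,
      List.isChain_reverse.mpr (hchq.imp fun _ _ h => h.symm), ?_⟩
    intro x hx y hy
    rw [hplast] at hx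
    rw [List.head?_reverse, getLast?_eq_getD (d := u) ht] at hy
    cases hx; cases hy
    exact h2
  by_cases h3 : ∃ j, j + 1 < p.length ∧ G.Adj u (p.getD j u) ∧ G.Adj v (p.getD (j + 1) u)
  · obtain ⟨j, hj, hju, hjv⟩ := h3
    refine builder (p.take (j + 1) ++ ((p.drop (j + 1)).reverse ++ q)) ?_ ?_
    · calc p.take (j + 1) ++ ((p.drop (j + 1)).reverse ++ q)
          ~ p.take (j + 1) ++ (p.drop (j + 1) ++ q) :=
            List.Perm.append_left _ ((List.reverse_perm _).append_right q)
        _ = p ++ q := by rw [← List.append_assoc, List.take_append_drop]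
    · refine List.isChain_append.mpr ⟨hchp.take _, List.isChain_append.mpr
        ⟨List.isChain_reverse.mpr ((hchp.drop _).imp fun _ _ h => h.symm), hchq, ?_⟩, ?_⟩
      · -- last of reversed drop is head of drop = p[j+1]; head of q is v
        intro x hx y hy
        rw [List.getLast?_reverse, head?_drop_eq (d := u) hj] at hx
        rw [hq, List.head?_cons] at hy
        cases hx; cases hy
        exact hjv.symm
      · -- last of take is p[j]; head of (reversed drop ++ q) is last of drop = u
        intro x hx y hy
        rw [getLast?_take_eq (l := p) (d := u) (by omega)] at hx
        rw [List.head?_append_of_ne_nil _ (by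
          simp only [ne_eq, List.reverse_eq_nil_iff, List.drop_eq_nil_iff]; omega)] at hy
        rw [List.head?_reverse, getLast?_drop_eq (l := p) (d := u) (by omega), hplastD] at hy
        cases hx; cases hy
        exact hju.symm
  by_cases h4 : ∃ j, j + 1 < q.length ∧ G.Adj u (q.getD j u) ∧ G.Adj v (q.getD (j + 1) u)
  · obtain ⟨j, hj, hju, hjv⟩ := h4
    refine builder (p ++ ((q.take (j + 1)).reverse ++ q.drop (j + 1))) ?_ ?_
    · refine List.Perm.append_left p ?_
      calc (q.take (j + 1)).reverse ++ q.drop (j + 1)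
          ~ q.take (j + 1) ++ q.drop (j + 1) := (List.reverse_perm _).append_right _
        _ = q := List.take_append_drop _ _
    · refine List.isChain_append.mpr ⟨hchp, List.isChain_append.mpr
        ⟨List.isChain_reverse.mpr ((hchq.take _).imp fun _ _ h => h.symm), hchq.drop _, ?_⟩, ?_⟩
      · intro x hx y hy
        rw [List.getLast?_reverse, head?_take_eq (d := u) ht, hq0] at hx
        rw [head?_drop_eq (d := u) hj] at hy
        cases hx; cases hy
        exact hjv
      · intro x hx y hy
        rw [hplast] at hx
        rw [List.head?_append_of_ne_nil _ (by
          simp only [ne_eq, List.reverse_eq_nil_iff]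
          intro hq'
          have hq'' := congrArg List.length hq'
          simp only [List.length_take, List.length_nil] at hq''
          omega)] at hy
        rw [List.head?_reverse, getLast?_take_eq (l := q) (d := u) (by omega)] at hy
        cases hx; cases hy
        exact hju
  -- contradiction via counting
  exfalso
  have hcovF : (p ++ q).toFinset = Finset.univ :=
    Finset.eq_univ_iff_forall.mpr fun w => List.mem_toFinset.mpr (hcov w)
  have hdisjF : Disjoint p.toFinset q.toFinset :=
    List.disjoint_toFinset_iff_disjoint.mpr hdisjpq
  have hsplitdeg : ∀ w : V, G.degree w
      = (G.neighborFinset w ∩ p.toFinset).card + (G.neighborFinset w ∩ q.toFinset).card := by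
    intro w
    rw [← Finset.card_union_of_disjoint (Finset.disjoint_of_subset_left
      Finset.inter_subset_right (Finset.disjoint_of_subset_right Finset.inter_subset_right
        hdisjF)), ← Finset.inter_union_distrib_left, ← List.toFinset_append, hcovF,
      Finset.inter_univ]
    rfl
  have hbp := side_bound G u v u p (fun h => h1 h) (by rw [hplastD]; exact fun h => G.irrefl h)
    (fun j hj hju hjv => h3 ⟨j, hj, hju, hjv⟩)
  have hbq := side_bound G u v u q (by rw [hq0]; exact fun h => G.irrefl h) (fun h => h2 h)
    (fun j hj hju hjv => h4 ⟨j, hj, hju, hjv⟩)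
  rw [card_filter_adj G u u hndp, card_filter_adj G v u hndp] at hbp
  rw [card_filter_adj G u u hndq, card_filter_adj G v u hndq] at hbq
  have hn : Fintype.card V = p.length + q.length := by
    rw [← List.length_append, ← List.toFinset_card_of_nodup hnd, hcovF, Finset.card_univ]
  have hdu := hsplitdeg u
  have hdv := hsplitdeg v
  omega

lemma step_iff {G H : SimpleGraph V} (h : ClosureStep (Fintype.card V - 1) G H) :
    (∃ l, HamList G l) ↔ (∃ l, HamList H l) := by
  obtain ⟨u, v, hne, hnadj, hdeg, rfl⟩ := h
  constructor
  · rintro ⟨l, hl⟩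
    exact ⟨l, hl.mono le_sup_left⟩
  · rintro ⟨l, hl⟩
    by_cases hch : List.Chain' G.Adj l
    · exact ⟨l, hl.1, hl.2.1, hl.2.2.1, hch⟩
    · obtain ⟨a', x, y, b', heq, hxy', hxy⟩ := exists_bad_pair hl.2.2.2 hch
      rw [heq] at hl
      rcases hxy' with hGxy | hExy
      · exact absurd hGxy hxy
      · rw [SimpleGraph.edge_adj] at hExy
        rcases hExy.1 with ⟨rfl, rfl⟩ | ⟨rfl, rfl⟩
        · exact step_core hne hnadj hdeg a' b' hl
        · have hcomm : SimpleGraph.edge x y = SimpleGraph.edge y x := by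
            unfold SimpleGraph.edge
            rw [Sym2.eq_swap]
          rw [← hcomm] at hl
          exact step_core hExy.2 hxy (by omega) a' b' hl

end BCAux

/-- A graph G of order n has a Hamiltonian path iff its (n-1)-closure has one. -/
theorem ham_path_iff_closure (n : ℕ) (G H : SimpleGraph (Fin n))
    (hH : IsKClosure (n - 1) G H) :
    (∃ (u v : Fin n) (p : G.Walk u v), p.IsHamiltonian) ↔
      (∃ (u v : Fin n) (p : H.Walk u v), p.IsHamiltonian) := by
  rw [BCAux.ham_iff_hamList, BCAux.ham_iff_hamList]
  have hn : n - 1 = Fintype.card (Fin n) - 1 := by rw [Fintype.card_fin]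
  rw [hn] at hH
  have key : ∀ {G' H' : SimpleGraph (Fin n)},
      Relation.ReflTransGen (ClosureStep (Fintype.card (Fin n) - 1)) G' H' →
      ((∃ l, BCAux.HamList G' l) ↔ ∃ l, BCAux.HamList H' l) := by
    intro G' H' h
    induction h with
    | refl => rfl
    | tail _ hstep ih => exact ih.trans (BCAux.step_iff hstep)
  exact key hH.1
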